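/- Let dA, dB, r be positive integers and let M be an orthogonal projection (Hermitian matrix with M * M = M) over ℂ indexed by (Fin dA × Fin dB) with rank M = r. Then there exist Euclidean-unit vectors a : Fin dA → ℂ and b : Fin dB → ℂ such that Re ⟪a ⊗ b, M.mulVec (a ⊗ b)⟫ ≥ max ((r:ℝ)/(dA·dB)) (1/dA), where (a ⊗ b)(i,j) := a i * b j. (That is, h_SEP(M) ≥ max{r/(dA dB), 1/dA}.) -/

import Mathlib

open Matrix

noncomputable section


-- averaging: exists index with value ≥ average
lemma exists_ge_avg {n : Type*} [Fintype n] (hn : Nonempty n) (f : n → ℝ) :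
    ∃ i, (∑ j, f j) / (Fintype.card n : ℝ) ≤ f i := by
  by_contra hc
  push_neg at hc
  have hcard : (0:ℝ) < (Fintype.card n : ℝ) := by
    exact_mod_cast Fintype.card_pos_iff.mpr hn
  have := Finset.sum_lt_sum_of_nonempty (Finset.univ_nonempty) (fun i _ => hc i)
  simp only [Finset.sum_const, Finset.card_univ, nsmul_eq_mul] at this
  rw [mul_div_cancel₀ _ (ne_of_gt hcard)] at this
  exact lt_irrefl _ this

lemma herm_shift {n : Type*} [Fintype n] {M : Matrix n n ℂ} (hM : M.IsHermitian)
    (x w : n → ℂ) : star x ⬝ᵥ (M *ᵥ w) = star (M *ᵥ x) ⬝ᵥ w := by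
  rw [Matrix.dotProduct_mulVec, Matrix.star_mulVec, hM.eq]


lemma my_trace_eq_sum_eigenvalues {n : Type*} [Fintype n] [DecidableEq n]
    {A : Matrix n n ℂ} (hA : A.IsHermitian) :
    A.trace = ∑ i, (hA.eigenvalues i : ℂ) := by
  exact hA.trace_eq_sum_eigenvalues

lemma eig01 {n : Type*} [Fintype n] [DecidableEq n]
    {A : Matrix n n ℂ} (hA : A.IsHermitian) (hproj : A * A = A) (i : n) :
    hA.eigenvalues i = 0 ∨ hA.eigenvalues i = 1 := by
  have h := hA.mulVec_eigenvectorBasis i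
  have h2 : A *ᵥ (A *ᵥ ⇑(hA.eigenvectorBasis i)) = A *ᵥ ⇑(hA.eigenvectorBasis i) := by
    rw [Matrix.mulVec_mulVec, hproj]
  rw [h, Matrix.mulVec_smul, h, smul_smul] at h2
  have hne : ⇑(hA.eigenvectorBasis i) ≠ 0 := by
    have := hA.eigenvectorBasis.orthonormal.ne_zero i
    intro hc
    apply this
    ext j
    exact congrFun hc j
  have h3 : (hA.eigenvalues i * hA.eigenvalues i - hA.eigenvalues i) • ⇑(hA.eigenvectorBasis i) = 0 := by
    rw [sub_smul, h2, sub_self]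
  rcases smul_eq_zero.mp h3 with h4 | h4
  · have h7 : hA.eigenvalues i * hA.eigenvalues i = hA.eigenvalues i := by
      linarith [sub_eq_zero.mp h4]
    have h6 : hA.eigenvalues i * (hA.eigenvalues i - 1) = 0 := by ring_nf; linarith
    rcases mul_eq_zero.mp h6 with h5 | h5
    · exact Or.inl h5
    · exact Or.inr (by linarith)
  · exact absurd h4 hne

/-- sum of eigenvalues of a hermitian projection equals its rank -/
lemma sum_eig_eq_rank {n : Type*} [Fintype n] [DecidableEq n]
    {A : Matrix n n ℂ} (hA : A.IsHermitian) (hproj : A * A = A) :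
    ∑ i, hA.eigenvalues i = (A.rank : ℝ) := by
  classical
  have h1 : ∑ i, hA.eigenvalues i
      = ∑ i, (if hA.eigenvalues i ≠ 0 then (1:ℝ) else 0) := by
    refine Finset.sum_congr rfl (fun i _ => ?_)
    rcases eig01 hA hproj i with h | h <;> simp [h]
  rw [h1, Finset.sum_boole, hA.rank_eq_card_non_zero_eigs, Fintype.card_subtype]


private lemma case1 {dA dB r : ℕ} (hdA : 0 < dA) (hdB : 0 < dB) (hr : 0 < r)
    (M : Matrix (Fin dA × Fin dB) (Fin dA × Fin dB) ℂ)
    (hM : M.IsHermitian) (hproj : M * M = M) (hrank : M.rank = r) :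
    ∃ (a : EuclideanSpace ℂ (Fin dA)) (b : EuclideanSpace ℂ (Fin dB)),
      ‖a‖ = 1 ∧ ‖b‖ = 1 ∧
      ((r : ℝ) / ((dA : ℝ) * (dB : ℝ))) ≤
        (star (fun p : Fin dA × Fin dB => a p.1 * b p.2) ⬝ᵥ
          M.mulVec (fun p : Fin dA × Fin dB => a p.1 * b p.2)).re := by
  have hne : Nonempty (Fin dA × Fin dB) := ⟨⟨⟨0, hdA⟩, ⟨0, hdB⟩⟩⟩
  have htr : ∑ p : Fin dA × Fin dB, (M p p).re = (r : ℝ) := by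
    have h1 : M.trace = ∑ i, (hM.eigenvalues i : ℂ) := my_trace_eq_sum_eigenvalues hM
    have h2 : (M.trace).re = (r : ℝ) := by
      rw [h1]
      rw [Complex.re_sum]
      simp only [Complex.ofReal_re]
      rw [sum_eig_eq_rank hM hproj, hrank]
    rw [← h2, Matrix.trace]
    rw [Complex.re_sum]
    rfl
  obtain ⟨p, hp⟩ := exists_ge_avg hne (fun p => (M p p).re)
  rw [htr] at hp
  have hcard : (Fintype.card (Fin dA × Fin dB) : ℝ) = (dA : ℝ) * (dB : ℝ) := by
    simp [Fintype.card_prod]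
  rw [hcard] at hp
  refine ⟨EuclideanSpace.single p.1 1, EuclideanSpace.single p.2 1, ?_, ?_, ?_⟩
  · simp [EuclideanSpace.norm_single]
  · simp [EuclideanSpace.norm_single]
  · have hx : (fun q : Fin dA × Fin dB =>
        (EuclideanSpace.single p.1 (1:ℂ)) q.1 * (EuclideanSpace.single p.2 (1:ℂ)) q.2)
        = Pi.single p 1 := by
      funext q
      simp only [EuclideanSpace.single_apply, Pi.single_apply]
      rcases eq_or_ne q p with h | h
      · subst h; simp
      · rw [if_neg h]
        by_cases h1 : q.1 = p.1 <;> by_cases h2 : q.2 = p.2 <;>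
          simp [h1, h2]
        exact absurd (Prod.ext h1 h2) h
    rw [hx]
    have hstar : star (Pi.single p (1:ℂ) : (Fin dA × Fin dB) → ℂ) = Pi.single p (1:ℂ) := by
      funext q
      simp [Pi.single_apply, apply_ite]
    rw [hstar, Matrix.mulVec_single, single_dotProduct]
    simpa using hp



private lemma case2 {dA dB r : ℕ} (hdA : 0 < dA) (hdB : 0 < dB) (hr : 0 < r)
    (M : Matrix (Fin dA × Fin dB) (Fin dA × Fin dB) ℂ)
    (hM : M.IsHermitian) (hproj : M * M = M) (hrank : M.rank = r) :
    ∃ (a : EuclideanSpace ℂ (Fin dA)) (b : EuclideanSpace ℂ (Fin dB)),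
      ‖a‖ = 1 ∧ ‖b‖ = 1 ∧
      (1 / (dA : ℝ)) ≤
        (star (fun p : Fin dA × Fin dB => a p.1 * b p.2) ⬝ᵥ
          M.mulVec (fun p : Fin dA × Fin dB => a p.1 * b p.2)).re := by
  classical
  -- get a unit eigenvector of M with eigenvalue 1
  have hcard : 0 < Fintype.card {i // hM.eigenvalues i ≠ 0} := by
    rw [← hM.rank_eq_card_non_zero_eigs, hrank]; exact hr
  obtain ⟨i₀, hi₀⟩ := Fintype.card_pos_iff.mp hcard
  have hl1 : hM.eigenvalues i₀ = 1 := (eig01 hM hproj i₀).resolve_left hi₀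
  set v : EuclideanSpace ℂ (Fin dA × Fin dB) := hM.eigenvectorBasis i₀ with hv_def
  have hv1 : M *ᵥ ⇑v = ⇑v := by
    have := hM.mulVec_eigenvectorBasis i₀
    rw [hl1, one_smul] at this
    exact this
  have hvnorm : ‖v‖ = 1 := hM.eigenvectorBasis.orthonormal.1 i₀
  have hvsum : ∑ p : Fin dA × Fin dB, Complex.normSq (v p) = 1 := by
    have h := EuclideanSpace.norm_eq v
    rw [hvnorm] at h
    have h2 : ∑ p, ‖v p‖ ^ 2 = 1 := Real.sqrt_eq_one.mp h.symm
    rw [← h2]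
    refine Finset.sum_congr rfl fun p _ => ?_
    rw [Complex.normSq_eq_norm_sq]
  -- the reduced matrix W
  set W : Matrix (Fin dA) (Fin dA) ℂ :=
    fun i k => ∑ j, v (i, j) * (starRingEnd ℂ) (v (k, j)) with hW_def
  have hW : W.IsHermitian := by
    ext i k
    rw [conjTranspose_apply]
    simp only [conjTranspose_apply, hW_def, Complex.star_def, map_sum, _root_.map_mul,
      Complex.conj_conj]
    exact Finset.sum_congr rfl fun j _ => by ring
  have hWtr : ∑ i, hW.eigenvalues i = 1 := by
    have h1 := my_trace_eq_sum_eigenvalues hW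
    have h2 : W.trace = ((1 : ℝ) : ℂ) := by
      rw [Fintype.sum_prod_type] at hvsum
      rw [Matrix.trace]
      simp only [diag_apply, hW_def]
      rw [← hvsum]
      push_cast
      refine Finset.sum_congr rfl fun i _ => Finset.sum_congr rfl fun j _ => ?_
      rw [Complex.mul_conj]
    rw [h2] at h1
    have := congrArg Complex.re h1
    simpa [Complex.re_sum] using this.symm
  obtain ⟨i₁, hi₁⟩ := exists_ge_avg ⟨⟨0, hdA⟩⟩ hW.eigenvalues
  rw [hWtr] at hi₁
  simp only [Fintype.card_fin] at hi₁
  set μ : ℝ := hW.eigenvalues i₁ with hμ_def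
  have hdA' : (0:ℝ) < dA := by exact_mod_cast hdA
  have hμpos : 0 < μ := lt_of_lt_of_le (by positivity) hi₁
  set a : EuclideanSpace ℂ (Fin dA) := hW.eigenvectorBasis i₁ with ha_def
  have hanorm : ‖a‖ = 1 := hW.eigenvectorBasis.orthonormal.1 i₁
  have haW : W *ᵥ ⇑a = μ • ⇑a := hW.mulVec_eigenvectorBasis i₁
  have hasum : ∑ i, (starRingEnd ℂ) (a i) * a i = 1 := by
    have h := EuclideanSpace.norm_eq a
    rw [hanorm] at h
    have h2 : ∑ i, ‖a i‖ ^ 2 = 1 := Real.sqrt_eq_one.mp h.symm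
    have e3 : ∑ i, (starRingEnd ℂ) (a i) * a i = (((∑ i, ‖a i‖ ^ 2 : ℝ)) : ℂ) := by
      push_cast
      refine Finset.sum_congr rfl fun i _ => ?_
      rw [mul_comm, Complex.mul_conj, Complex.normSq_eq_norm_sq]
      push_cast; ring
    rw [e3, h2]; norm_num
  -- the c vector
  set c : Fin dB → ℂ := fun j => ∑ i, (starRingEnd ℂ) (a i) * v (i, j) with hc_def
  have key1 : ∑ j, (starRingEnd ℂ) (c j) * c j = (μ : ℂ) := by
    have e1 : ∑ j, (starRingEnd ℂ) (c j) * c j = star ⇑a ⬝ᵥ (W *ᵥ ⇑a) := by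
      simp only [hc_def, hW_def, dotProduct, mulVec, map_sum, _root_.map_mul, Complex.conj_conj,
        Finset.sum_mul, Finset.mul_sum, Pi.star_apply, Complex.star_def]
      rw [Finset.sum_comm]
      refine Finset.sum_congr rfl fun i _ => ?_
      rw [Finset.sum_comm]
      refine Finset.sum_congr rfl fun k _ => ?_
      refine Finset.sum_congr rfl fun j _ => by ring
    rw [e1, haW, dotProduct_smul]
    have : star ⇑a ⬝ᵥ ⇑a = 1 := by
      simp only [dotProduct, Pi.star_apply, Complex.star_def]
      exact hasum
    rw [this]
    simp [Complex.real_smul]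
  -- b vector
  set s : ℝ := Real.sqrt μ with hs_def
  have hspos : 0 < s := Real.sqrt_pos.mpr hμpos
  have hs2 : s ^ 2 = μ := Real.sq_sqrt hμpos.le
  set b : EuclideanSpace ℂ (Fin dB) := WithLp.toLp 2 fun j => ((s : ℂ))⁻¹ * c j with hb_def
  have hcsum : ∑ j, ‖c j‖ ^ 2 = μ := by
    have := congrArg Complex.re key1
    rw [Complex.re_sum] at this
    simp only [Complex.ofReal_re] at this
    rw [← this]
    refine Finset.sum_congr rfl fun j _ => ?_
    rw [mul_comm, Complex.mul_conj, Complex.ofReal_re, Complex.normSq_eq_norm_sq]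
  have hbnorm : ‖b‖ = 1 := by
    rw [EuclideanSpace.norm_eq]
    have : ∀ j, ‖b j‖ ^ 2 = s⁻¹ ^ 2 * ‖c j‖ ^ 2 := by
      intro j
      rw [hb_def]
      simp only [norm_mul, norm_inv, Complex.norm_real, Real.norm_eq_abs,
        abs_of_pos hspos]
      ring
    rw [Finset.sum_congr rfl fun j _ => this j, ← Finset.mul_sum, hcsum]
    rw [← hs2]
    rw [show s⁻¹ ^ 2 * s ^ 2 = 1 by field_simp]
    exact Real.sqrt_one
  -- the product vector
  set x : Fin dA × Fin dB → ℂ := fun p => a p.1 * b p.2 with hx_def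
  have key2 : star x ⬝ᵥ ⇑v = (s : ℂ) := by
    have e1 : star x ⬝ᵥ ⇑v = ∑ j, (starRingEnd ℂ) (b j) * c j := by
      simp only [dotProduct, Pi.star_apply, hx_def, Complex.star_def, _root_.map_mul]
      rw [Fintype.sum_prod_type]
      rw [Finset.sum_comm]
      refine Finset.sum_congr rfl fun j _ => ?_
      rw [hc_def, Finset.mul_sum]
      refine Finset.sum_congr rfl fun i _ => by ring
    rw [e1]
    have e2 : ∀ j, (starRingEnd ℂ) (b j) = ((s:ℂ))⁻¹ * (starRingEnd ℂ) (c j) := by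
      intro j
      rw [hb_def]
      simp [_root_.map_mul, map_inv₀, Complex.conj_ofReal]
    rw [Finset.sum_congr rfl fun j _ => by rw [e2 j, mul_assoc], ← Finset.mul_sum, key1]
    have hsne : (s:ℂ) ≠ 0 := by exact_mod_cast hspos.ne'
    rw [show ((μ:ℝ):ℂ) = ((s:ℂ))^2 by rw [← hs2]; push_cast; ring]
    rw [inv_mul_eq_div, sq, mul_div_assoc, div_self hsne, mul_one]
  -- final bound
  refine ⟨a, b, hanorm, hbnorm, ?_⟩
  have e_proj : star x ⬝ᵥ (M *ᵥ x) = star (M *ᵥ x) ⬝ᵥ (M *ᵥ x) := by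
    conv_lhs => rw [← hproj, ← Matrix.mulVec_mulVec]
    exact herm_shift hM x (M *ᵥ x)
  set y : EuclideanSpace ℂ (Fin dA × Fin dB) := WithLp.toLp 2 (M *ᵥ x) with hy_def
  have hinner1 : (inner ℂ y v : ℂ) = star x ⬝ᵥ ⇑v := by
    rw [EuclideanSpace.inner_eq_star_dotProduct, dotProduct_comm]
    have : star y.ofLp ⬝ᵥ v.ofLp = star (M *ᵥ x) ⬝ᵥ ⇑v := rfl
    rw [this, ← herm_shift hM x ⇑v, hv1]
  have h1 : s ≤ ‖y‖ := by
    have hcs := norm_inner_le_norm (𝕜 := ℂ) y v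
    rw [hinner1, key2, hvnorm, mul_one] at hcs
    rwa [Complex.norm_real, Real.norm_eq_abs, abs_of_pos hspos] at hcs
  have h2 : (star x ⬝ᵥ (M *ᵥ x)).re = ‖y‖ ^ 2 := by
    rw [e_proj]
    have : star (M *ᵥ x) ⬝ᵥ (M *ᵥ x) = (inner ℂ y y : ℂ) := by
      rw [EuclideanSpace.inner_eq_star_dotProduct, dotProduct_comm]
    rw [this]
    exact inner_self_eq_norm_sq (𝕜 := ℂ) y
  calc (1 : ℝ) / dA ≤ μ := hi₁
    _ = s ^ 2 := hs2.symm
    _ ≤ ‖y‖ ^ 2 := by nlinarith [norm_nonneg y]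
    _ = (star x ⬝ᵥ (M *ᵥ x)).re := h2.symm


/-- Theorem: for a rank-`r` projector `M` on `ℂ^{dA} ⊗ ℂ^{dB}`,
`h_SEP(M) ≥ max { r/(dA·dB), 1/dA }`, witnessed by some product unit vector. -/
theorem hSEP_lower_bound {dA dB r : ℕ} (hdA : 0 < dA) (hdB : 0 < dB) (hr : 0 < r)
    (M : Matrix (Fin dA × Fin dB) (Fin dA × Fin dB) ℂ)
    (hM : M.IsHermitian) (hproj : M * M = M) (hrank : M.rank = r) :
    ∃ (a : EuclideanSpace ℂ (Fin dA)) (b : EuclideanSpace ℂ (Fin dB)),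
      ‖a‖ = 1 ∧ ‖b‖ = 1 ∧
      max ((r : ℝ) / ((dA : ℝ) * (dB : ℝ))) (1 / (dA : ℝ)) ≤
        (star (fun p : Fin dA × Fin dB => a p.1 * b p.2) ⬝ᵥ
          M.mulVec (fun p : Fin dA × Fin dB => a p.1 * b p.2)).re := by
  rcases le_total ((1:ℝ) / (dA : ℝ)) ((r : ℝ) / ((dA : ℝ) * (dB : ℝ))) with h | h
  · rw [max_eq_left h]
    exact case1 hdA hdB hr M hM hproj hrank
  · rw [max_eq_right h]
    exact case2 hdA hdB hr M hM hproj hrank
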